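/- Let a, b, c, d, e, f ∈ ℝ, M = [[1-a-b, a, b], [c, 1-c-d, d], [e, f, 1-e-f]], s = a+b+c+d+e+f, p = ad+ae+af+bc+bd+bf+ce+cf+de, and suppose Δ = s^2 - 4p > 0 and that x_1 = (2-s-√Δ)/2 and x_2 = (2-s+√Δ)/2 satisfy |x_1| < 1 and |x_2| < 1. Let P_0 = (P_R(0), P_C(0), P_T(0)) be any probability row vector. Then the sequence P_n = P_0 · M^n of frequency vectors converges as n → ∞, and its limit is P_0 · (1/p)·(M^2 + (s-2)·M + (1-s+p)·I_3). -/

import Mathlib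

open Matrix Filter

set_option maxHeartbeats 1600000 in
lemma stmt_14_aux (x1 x2 : ℝ) (M : Matrix (Fin 3) (Fin 3) ℝ)
    (hCH : M * M * M = (1 + x1 + x2) • (M * M) - (x1 + x2 + x1 * x2) • M
      + (x1 * x2) • (1 : Matrix (Fin 3) (Fin 3) ℝ))
    (hq : x1 ≠ x2) (h1 : |x1| < 1) (h2 : |x2| < 1) :
    Tendsto (fun n : ℕ => M ^ n) atTop
      (nhds ((1 / ((1 - x1) * (1 - x2))) •
        (M ^ 2 + (-(x1 + x2)) • M + (x1 * x2) • (1 : Matrix (Fin 3) (Fin 3) ℝ)))) := by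
  have hx1ne : (1:ℝ) - x1 ≠ 0 := by cases abs_lt.mp h1; intro h; linarith
  have hx2ne : (1:ℝ) - x2 ≠ 0 := by cases abs_lt.mp h2; intro h; linarith
  have hqne : x1 - x2 ≠ 0 := sub_ne_zero.mpr hq
  obtain ⟨L, hL⟩ : ∃ L : Matrix (Fin 3) (Fin 3) ℝ, L = (1 / ((1 - x1) * (1 - x2))) •
      (M ^ 2 + (-(x1 + x2)) • M + (x1 * x2) • (1 : Matrix (Fin 3) (Fin 3) ℝ)) := ⟨_, rfl⟩
  rw [← hL]
  have hsq : M ^ 2 = M * M := sq M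
  have hML : M * L = L := by
    rw [hL, hsq, Matrix.mul_smul, Matrix.mul_add, Matrix.mul_add, Matrix.mul_smul,
      Matrix.mul_smul, Matrix.mul_one, ← Matrix.mul_assoc, hCH]
    match_scalars <;> field_simp <;> ring
  have hLM : L * M = L := by
    rw [hL, hsq, Matrix.smul_mul, Matrix.add_mul, Matrix.add_mul, Matrix.smul_mul,
      Matrix.smul_mul, Matrix.one_mul, Matrix.mul_assoc, ← Matrix.mul_assoc, hCH]
    match_scalars <;> field_simp <;> ring
  have hLMM : L * (M * M) = L := by rw [← Matrix.mul_assoc, hLM, hLM]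
  have hLL : L * L = L := by
    nth_rewrite 2 [hL]
    rw [hsq, Matrix.mul_smul, Matrix.mul_add, Matrix.mul_add, Matrix.mul_smul,
      Matrix.mul_smul, Matrix.mul_one, hLMM, hLM]
    rw [hL]
    match_scalars <;> field_simp <;> ring
  obtain ⟨N, hN⟩ : ∃ N : Matrix (Fin 3) (Fin 3) ℝ, N = M - L := ⟨_, rfl⟩
  have hN2 : N * N = M * M - L := by
    rw [hN]
    simp only [sub_mul, mul_sub, hML, hLM, hLL]
    abel
  have hLN : L * N = 0 := by rw [hN, mul_sub, hLM, hLL, sub_self]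
  have hN3 : N * (N * N) = (x1 + x2) • (N * N) - (x1 * x2) • N := by
    have e1 : N * (N * N) = M * M * M - L := by
      rw [hN2, hN]
      simp only [sub_mul, mul_sub, hML, hLMM, hLL, Matrix.mul_assoc]
      abel
    rw [e1, hN2, hN, hCH, hL, hsq]
    match_scalars <;> field_simp <;> ring
  obtain ⟨A, hA⟩ : ∃ A : Matrix (Fin 3) (Fin 3) ℝ, A = N * N - x2 • N := ⟨_, rfl⟩
  obtain ⟨B, hB⟩ : ∃ B : Matrix (Fin 3) (Fin 3) ℝ, B = N * N - x1 • N := ⟨_, rfl⟩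
  have hNA : N * A = x1 • A := by
    rw [hA, mul_sub, Matrix.mul_smul, hN3]; module
  have hNB : N * B = x2 • B := by
    rw [hB, mul_sub, Matrix.mul_smul, hN3]; module
  have hpow : ∀ n : ℕ, N ^ (n + 1) = (x1 ^ n / (x1 - x2)) • A - (x2 ^ n / (x1 - x2)) • B := by
    intro n
    induction n with
    | zero =>
      rw [pow_one, pow_zero, pow_zero, hA, hB]
      match_scalars <;> field_simp <;> ring
    | succ n ih =>
      rw [pow_succ', ih, mul_sub, Matrix.mul_smul, Matrix.mul_smul, hNA, hNB]
      match_scalars <;> field_simp <;> first | ring1 | (left; ring1)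
  have hNt : Tendsto (fun n : ℕ => N ^ (n + 1)) atTop (nhds 0) := by
    have t1 : Tendsto (fun n : ℕ => (x1 ^ n / (x1 - x2)) • A) atTop (nhds 0) := by
      have := ((tendsto_pow_atTop_nhds_zero_of_abs_lt_one h1).div_const (x1 - x2)).smul_const A
      simpa using this
    have t2 : Tendsto (fun n : ℕ => (x2 ^ n / (x1 - x2)) • B) atTop (nhds 0) := by
      have := ((tendsto_pow_atTop_nhds_zero_of_abs_lt_one h2).div_const (x1 - x2)).smul_const B
      simpa using this
    have := t1.sub t2
    rw [sub_zero] at this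
    exact this.congr fun n => (hpow n).symm
  have hLNn : ∀ n : ℕ, L * N ^ (n + 1) = 0 := by
    intro n
    induction n with
    | zero => rw [pow_one, hLN]
    | succ n ih => rw [pow_succ, ← Matrix.mul_assoc, ih, Matrix.zero_mul]
  have hMn : ∀ n : ℕ, M ^ (n + 1) = L + N ^ (n + 1) := by
    intro n
    induction n with
    | zero => rw [pow_one, pow_one, hN]; abel
    | succ n ih =>
      rw [pow_succ', ih, mul_add, hML]
      congr 1
      have hMLN : M = L + N := by rw [hN]; abel
      rw [hMLN, add_mul, hLNn, zero_add, ← pow_succ']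
  have hMt : Tendsto (fun n : ℕ => M ^ (n + 1)) atTop (nhds L) := by
    have := (tendsto_const_nhds (x := L) (f := atTop)).add hNt
    rw [add_zero] at this
    exact this.congr fun n => (hMn n).symm
  exact (tendsto_add_atTop_iff_nat 1).mp hMt

set_option maxHeartbeats 1600000 in
theorem stmt_14 (a b c d e f s p x1 x2 : ℝ)
    (M : Matrix (Fin 3) (Fin 3) ℝ)
    (hM : M = !![1 - a - b, a, b; c, 1 - c - d, d; e, f, 1 - e - f])
    (hs : s = a + b + c + d + e + f)
    (hp : p = a*d + a*e + a*f + b*c + b*d + b*f + c*e + c*f + d*e)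
    (hΔ : s ^ 2 - 4 * p > 0)
    (hx1 : x1 = (2 - s - Real.sqrt (s ^ 2 - 4 * p)) / 2)
    (hx2 : x2 = (2 - s + Real.sqrt (s ^ 2 - 4 * p)) / 2)
    (hx1lt : |x1| < 1) (hx2lt : |x2| < 1)
    (PR0 PC0 PT0 : ℝ) (hPR : PR0 ∈ Set.Icc (0:ℝ) 1) (hPC : PC0 ∈ Set.Icc (0:ℝ) 1)
    (hPT : PT0 ∈ Set.Icc (0:ℝ) 1) (hsum : PR0 + PC0 + PT0 = 1) :
    Tendsto (fun n : ℕ => ![PR0, PC0, PT0] ᵥ* M ^ n) atTop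
      (nhds (![PR0, PC0, PT0] ᵥ* ((1 / p) • (M ^ 2 + (s - 2) • M +
        (1 - s + p) • (1 : Matrix (Fin 3) (Fin 3) ℝ))))) := by
  have hsqrt : Real.sqrt (s ^ 2 - 4 * p) ^ 2 = s ^ 2 - 4 * p := Real.sq_sqrt hΔ.le
  have hsqrtpos : 0 < Real.sqrt (s ^ 2 - 4 * p) := Real.sqrt_pos.mpr hΔ
  have e_sum : x1 + x2 = 2 - s := by rw [hx1, hx2]; ring
  have e_prod : x1 * x2 = 1 - s + p := by rw [hx1, hx2]; linear_combination (-(1:ℝ)/4) * hsqrt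
  have hq : x1 ≠ x2 := by rw [hx1, hx2]; intro h; nlinarith
  have hCHsp : M * M * M = (3 - s) • (M * M) + (2*s - 3 - p) • M
      + (1 - s + p) • (1 : Matrix (Fin 3) (Fin 3) ℝ) := by
    subst hM hs hp
    ext i j
    fin_cases i <;> fin_cases j <;>
      · simp only [Matrix.mul_apply, Fin.sum_univ_three, Matrix.add_apply, Matrix.smul_apply,
          Matrix.one_apply, Matrix.cons_val', Matrix.cons_val_zero, Matrix.cons_val_one,
          Matrix.head_cons, Matrix.head_fin_const, Matrix.empty_val', Matrix.cons_val_fin_one,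
          smul_eq_mul, Fin.mk_zero, Fin.mk_one, Matrix.cons_val_two, Matrix.tail_cons]
        norm_num [Fin.ext_iff]
        simp [Matrix.vecHead, Matrix.vecTail]
        ring
  have hCH : M * M * M = (1 + x1 + x2) • (M * M) - (x1 + x2 + x1 * x2) • M
      + (x1 * x2) • (1 : Matrix (Fin 3) (Fin 3) ℝ) := by
    rw [hCHsp]
    match_scalars <;> linarith [e_sum, e_prod]
  have haux := stmt_14_aux x1 x2 M hCH hq hx1lt hx2lt
  have hLeq : (1 / ((1 - x1) * (1 - x2))) •
      (M ^ 2 + (-(x1 + x2)) • M + (x1 * x2) • (1 : Matrix (Fin 3) (Fin 3) ℝ))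
      = (1 / p) • (M ^ 2 + (s - 2) • M + (1 - s + p) • (1 : Matrix (Fin 3) (Fin 3) ℝ)) := by
    have hpeq : (1 - x1) * (1 - x2) = p := by linear_combination e_prod - e_sum
    rw [hpeq, show -(x1 + x2) = s - 2 by linarith [e_sum], e_prod]
  rw [hLeq] at haux
  exact ((continuous_const.matrix_vecMul continuous_id).tendsto _).comp haux
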